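/- Let x = (x_1,…,x_m) ∈ ℤ^m be such that either all entries of x are pairwise distinct, or there is exactly one pair of positions i₀ < j₀ with x_{i₀} = x_{j₀} (all other pairs of entries being distinct). Let y = (y_1,…,y_m) ∈ ℤ^m satisfy y_k ∈ {x_k − 1, x_k} for every k. Then there exists a permutation σ of {1,…,m} such that both (x_{σ(1)},…,x_{σ(m)}) and (y_{σ(1)},…,y_{σ(m)}) are weakly decreasing. (This is the combinatorial content of Lemma 7.15: for κ regular or with a unique singular pair, some w ∈ W makes both w^{-1}·κ and w^{-1}·κ^{ad} dominant; the hypothesis y_k ∈ {x_k − 1, x_k} encodes that each coefficient of κ^{ad}+ρ₀ equals the corresponding coefficient of κ+ρ₀ or is one less, as follows from the procedure of odd reflections.) -/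

import Mathlib

/-- Let `x ∈ ℤ^m` have pairwise distinct entries, or have exactly
one pair of positions `i₀ < j₀` with `x i₀ = x j₀` (all other pairs of entries
distinct). Let `y ∈ ℤ^m` satisfy `y k ∈ {x k − 1, x k}` for every `k`. Then some
permutation `σ` of the positions makes both `x ∘ σ` and `y ∘ σ` weakly decreasing. -/
theorem exists_perm_antitone_of_both
    (m : ℕ) (x y : Fin m → ℤ)
    (hx : Function.Injective x ∨
      ∃ i₀ j₀ : Fin m, i₀ < j₀ ∧ x i₀ = x j₀ ∧
        ∀ i j : Fin m, i < j → x i = x j → i = i₀ ∧ j = j₀)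
    (hy : ∀ k : Fin m, y k = x k - 1 ∨ y k = x k) :
    ∃ σ : Equiv.Perm (Fin m), Antitone (x ∘ σ) ∧ Antitone (y ∘ σ) := by
  set f : Fin m → ℤ ×ₗ ℤ := fun k => toLex (-x k, -y k) with hf
  set σ := Tuple.sort f with hσ
  have key : ∀ a b : Fin m, a ≤ b →
      x (σ b) ≤ x (σ a) ∧ y (σ b) ≤ y (σ a) := by
    intro a b hab
    have h : f (σ a) ≤ f (σ b) := Tuple.monotone_sort f hab
    have h' : toLex (-x (σ a), -y (σ a)) ≤ toLex (-x (σ b), -y (σ b)) := h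
    rcases Prod.Lex.le_iff.mp h' with h1 | ⟨h1, h2⟩
    · have hx' : x (σ b) < x (σ a) := by
        have : -x (σ a) < -x (σ b) := h1
        omega
      have hy1 := hy (σ a)
      have hy2 := hy (σ b)
      omega
    · have hx' : -x (σ a) = -x (σ b) := h1
      have hy' : -y (σ a) ≤ -y (σ b) := h2
      omega
  exact ⟨σ, fun a b hab => (key a b hab).1, fun a b hab => (key a b hab).2⟩
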